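/- For every binary sequence s ∈ S and every integer n ≥ 1, the coefficient a_n^s satisfies |a_n^s| ≤ (1/20)·10^n/n². -/

import Mathlib

noncomputable section

/-- The space of binary sequences `{0,1}^ℕ`. -/
abbrev BinSeq := ℕ → Fin 2

/-- The left-shift map `σ`. -/
def shift (s : BinSeq) : BinSeq := fun n => s (n + 1)

/-- `a : S → ℕ → ℂ` satisfies the recursion defining the coefficients `aₙˢ`:
`a₀ˢ = (−1)^{s₀}` and `a_{n+1}ˢ = −(1/(2a₀ˢ)) Σ_{i+j=n+1, i,j≥1} aᵢˢ aⱼˢ` if `4 ∤ n`,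
with the extra term `−a_{n/4}^{σ(s)}/(2a₀ˢ)` if `4 ∣ n`. -/
def IsCoeffFamily (a : BinSeq → ℕ → ℂ) : Prop :=
  (∀ s : BinSeq, a s 0 = (-1 : ℂ) ^ (s 0 : ℕ)) ∧
  (∀ (s : BinSeq) (n : ℕ), a s (n + 1) =
    if 4 ∣ n then
      -(a (shift s) (n / 4)) / (2 * a s 0)
        - (∑ i ∈ Finset.Ico 1 (n + 1), a s i * a s (n + 1 - i)) / (2 * a s 0)
    else
      -(∑ i ∈ Finset.Ico 1 (n + 1), a s i * a s (n + 1 - i)) / (2 * a s 0))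

private def bb (n : ℕ) : ℝ := (1 / 20) * 10 ^ n / (n : ℝ) ^ 2

private lemma bb_nonneg (n : ℕ) : 0 ≤ bb n := by unfold bb; positivity

private lemma sum_inv_sq (m : ℕ) :
    ∑ i ∈ Finset.Ico 1 (m + 2), (1 : ℝ) / (i : ℝ) ^ 2 ≤ 2 - 1 / ((m : ℝ) + 1) := by
  induction m with
  | zero => norm_num
  | succ m ih =>
    rw [Finset.sum_Ico_succ_top (by omega)]
    have hc : (0:ℝ) < (m:ℝ) + 1 := by positivity
    have hc2 : (0:ℝ) < (m:ℝ) + 2 := by positivity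
    have key : (1:ℝ)/((m:ℝ)+2)^2 ≤ 1/((m:ℝ)+1) - 1/((m:ℝ)+2) := by
      rw [div_sub_div _ _ (ne_of_gt hc) (ne_of_gt hc2),
        div_le_div_iff₀ (by positivity) (by positivity)]
      nlinarith
    push_cast
    have e2 : (1:ℝ)/((m:ℝ)+1+1) = 1/((m:ℝ)+2) := by ring_nf
    linarith [e2]

private lemma sum_inv_sq' (m : ℕ) :
    ∑ i ∈ Finset.Ico 1 m, (1 : ℝ) / (i : ℝ) ^ 2 ≤ 2 := by
  match m with
  | 0 => simp
  | 1 => simp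
  | (m + 2) =>
    have h := sum_inv_sq m
    have : (0:ℝ) ≤ 1 / ((m:ℝ)+1) := by positivity
    linarith

private lemma reflect_sum (m : ℕ) :
    ∑ i ∈ Finset.Ico 1 m, (1 : ℝ) / ((m - i : ℕ) : ℝ) ^ 2
      = ∑ i ∈ Finset.Ico 1 m, (1 : ℝ) / (i : ℝ) ^ 2 := by
  apply Finset.sum_nbij' (i := fun i => m - i) (j := fun i => m - i)
  · intro i hi; simp only [Finset.mem_Ico] at *; omega
  · intro i hi; simp only [Finset.mem_Ico] at *; omega
  · intro i hi; simp only [Finset.mem_Ico] at *; omega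
  · intro i hi; simp only [Finset.mem_Ico] at *; omega
  · intro i hi; rfl

private lemma alg (x y : ℝ) (hx : 1 ≤ x) (hy : 1 ≤ y) :
    1 / (x ^ 2 * y ^ 2) ≤ 4 / (x + y) ^ 2 * (1 / x ^ 2 + 1 / y ^ 2) := by
  have hx0 : (0:ℝ) < x := by linarith
  have hy0 : (0:ℝ) < y := by linarith
  rw [div_add_div _ _ (by positivity) (by positivity), div_mul_div_comm,
    div_le_div_iff₀ (by positivity) (by positivity)]
  nlinarith [mul_nonneg (sq_nonneg (x - y)) (mul_nonneg (sq_nonneg x) (sq_nonneg y)),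
    sq_nonneg (x ^ 2 * y), sq_nonneg (x * y ^ 2)]

private lemma key_sum (m : ℕ) :
    ∑ i ∈ Finset.Ico 1 m, bb i * bb (m - i) ≤ (4 / 5) * bb m := by
  have hterm : ∀ i ∈ Finset.Ico 1 m,
      bb i * bb (m - i)
        ≤ (1/400) * 10 ^ m * (4 / (m:ℝ)^2) * (1 / (i:ℝ)^2 + 1 / ((m - i : ℕ):ℝ)^2) := by
    intro i hi
    simp only [Finset.mem_Ico] at hi
    obtain ⟨hi1, hi2⟩ := hi
    have hile : i ≤ m := hi2.le
    have hmi1 : 1 ≤ m - i := by omega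
    have hx : (1:ℝ) ≤ (i:ℝ) := by exact_mod_cast hi1
    have hy : (1:ℝ) ≤ ((m - i : ℕ):ℝ) := by exact_mod_cast hmi1
    have hxy : (i:ℝ) + ((m - i : ℕ):ℝ) = (m:ℝ) := by
      rw [Nat.cast_sub hile]; ring
    have hpow : (10:ℝ) ^ i * 10 ^ (m - i) = 10 ^ m := by
      rw [← pow_add, Nat.add_sub_cancel' hile]
    have e : bb i * bb (m - i) = (1/400) * 10 ^ m * (1 / ((i:ℝ)^2 * ((m - i:ℕ):ℝ)^2)) := by
      simp only [bb]
      rw [← hpow]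
      field_simp
      ring
    rw [e]
    have h := alg (i:ℝ) ((m - i : ℕ):ℝ) hx hy
    rw [hxy] at h
    have h0 : (0:ℝ) ≤ (1/400) * 10 ^ m := by positivity
    calc (1/400) * 10 ^ m * (1 / ((i:ℝ)^2 * ((m - i:ℕ):ℝ)^2))
        ≤ (1/400) * 10 ^ m * (4 / (m:ℝ)^2 * (1 / (i:ℝ)^2 + 1 / ((m - i : ℕ):ℝ)^2)) :=
          mul_le_mul_of_nonneg_left h h0
      _ = (1/400) * 10 ^ m * (4 / (m:ℝ)^2) * (1 / (i:ℝ)^2 + 1 / ((m - i : ℕ):ℝ)^2) := by ring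
  calc ∑ i ∈ Finset.Ico 1 m, bb i * bb (m - i)
      ≤ ∑ i ∈ Finset.Ico 1 m,
          (1/400) * 10 ^ m * (4 / (m:ℝ)^2) * (1 / (i:ℝ)^2 + 1 / ((m - i : ℕ):ℝ)^2) :=
        Finset.sum_le_sum hterm
    _ = (1/400) * 10 ^ m * (4 / (m:ℝ)^2) *
          ((∑ i ∈ Finset.Ico 1 m, (1:ℝ) / (i:ℝ)^2)
            + ∑ i ∈ Finset.Ico 1 m, (1:ℝ) / ((m - i : ℕ):ℝ)^2) := by
        rw [← Finset.sum_add_distrib, ← Finset.mul_sum]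
    _ ≤ (1/400) * 10 ^ m * (4 / (m:ℝ)^2) * (2 + 2) := by
        apply mul_le_mul_of_nonneg_left _ (by positivity)
        have h1 := sum_inv_sq' m
        have h2 : ∑ i ∈ Finset.Ico 1 m, (1:ℝ) / ((m - i : ℕ):ℝ)^2 ≤ 2 := by
          rw [reflect_sum]; exact h1
        linarith
    _ = (16/400) * 10 ^ m / (m:ℝ)^2 := by ring
    _ = (4/5) * bb m := by unfold bb; ring

private lemma bb_quarter (k : ℕ) (hk : 1 ≤ k) :
    bb k / 2 ≤ (3/5) * bb (4 * k + 1) := by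
  have hx : (1:ℝ) ≤ (k:ℝ) := by exact_mod_cast hk
  have hP : (0:ℝ) < 10 ^ k := by positivity
  have hQ : (10000:ℝ) ≤ 10 ^ (3 * k + 1) := by
    calc (10000:ℝ) = 10 ^ 4 := by norm_num
      _ ≤ 10 ^ (3 * k + 1) := pow_le_pow_right₀ (by norm_num) (by omega)
  have hsplit : (10:ℝ) ^ (4 * k + 1) = 10 ^ k * 10 ^ (3 * k + 1) := by
    rw [← pow_add]; congr 1; omega
  unfold bb
  rw [hsplit]
  have hc1 : ((4 * k + 1 : ℕ):ℝ) = 4 * (k:ℝ) + 1 := by push_cast; ring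
  rw [hc1]
  rw [div_div, ← mul_div_assoc, div_le_div_iff₀ (by positivity) (by positivity)]
  nlinarith [mul_nonneg (mul_nonneg hP.le (sub_nonneg.2 hQ)) (sq_nonneg (k:ℝ)),
    mul_nonneg hP.le (mul_nonneg (sub_nonneg.2 hx) (by positivity : (0:ℝ) ≤ 9*(k:ℝ)+1)),
    mul_pos hP (by positivity : (0:ℝ) < (k:ℝ)^2)]

/-- For every `s ∈ S` and `n ≥ 1`, `|aₙˢ| ≤ (1/20)·10ⁿ/n²`. -/
theorem stmt8 (a : BinSeq → ℕ → ℂ) (ha : IsCoeffFamily a) (s : BinSeq) (n : ℕ)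
    (hn : 1 ≤ n) :
    ‖a s n‖ ≤ (1 / 20) * 10 ^ n / (n : ℝ) ^ 2 := by
  obtain ⟨h0, hrec⟩ := ha
  have hn0 : ∀ t : BinSeq, ‖a t 0‖ = 1 := by
    intro t; rw [h0 t]; simp
  have hn2 : ∀ t : BinSeq, ‖2 * a t 0‖ = 2 := by
    intro t; rw [norm_mul, hn0 t, mul_one]; norm_num
  suffices H : ∀ n : ℕ, ∀ t : BinSeq, 1 ≤ n → ‖a t n‖ ≤ bb n by
    have h := H n s hn
    exact h
  clear hn n s
  intro n
  induction n using Nat.strong_induction_on with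
  | _ n IH =>
    intro t hn1
    obtain ⟨m, rfl⟩ : ∃ m, n = m + 1 := ⟨n - 1, (Nat.succ_pred_eq_of_pos hn1).symm⟩
    have hsum : ‖∑ i ∈ Finset.Ico 1 (m + 1), a t i * a t (m + 1 - i)‖
        ≤ (4 / 5) * bb (m + 1) := by
      calc ‖∑ i ∈ Finset.Ico 1 (m + 1), a t i * a t (m + 1 - i)‖
          ≤ ∑ i ∈ Finset.Ico 1 (m + 1), ‖a t i * a t (m + 1 - i)‖ := norm_sum_le _ _
        _ ≤ ∑ i ∈ Finset.Ico 1 (m + 1), bb i * bb (m + 1 - i) := by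
            apply Finset.sum_le_sum
            intro i hi
            simp only [Finset.mem_Ico] at hi
            rw [norm_mul]
            exact mul_le_mul (IH i (by omega) t hi.1)
              (IH (m + 1 - i) (by omega) t (by omega)) (norm_nonneg _) (bb_nonneg i)
        _ ≤ (4 / 5) * bb (m + 1) := key_sum (m + 1)
    rcases Nat.eq_zero_or_pos m with hm | hm
    · subst hm
      rw [hrec t 0, if_pos (dvd_zero 4)]
      simp only [Nat.zero_div, Finset.Ico_self, Finset.sum_empty, zero_div, sub_zero]
      rw [norm_div, norm_neg, hn0, hn2]
      show (1:ℝ) / 2 ≤ bb 1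
      norm_num [bb]
    · rw [hrec t m]
      by_cases hd : 4 ∣ m
      · rw [if_pos hd]
        obtain ⟨k, rfl⟩ := hd
        have hk : 1 ≤ k := by omega
        have hq : 4 * k / 4 = k := by omega
        rw [hq]
        have hx : ‖a (shift t) k‖ ≤ bb k := IH k (by omega) (shift t) hk
        have hquarter := bb_quarter k hk
        have hb := bb_nonneg (4 * k + 1)
        calc ‖-(a (shift t) k) / (2 * a t 0)
              - (∑ i ∈ Finset.Ico 1 (4 * k + 1), a t i * a t (4 * k + 1 - i)) / (2 * a t 0)‖
            ≤ ‖-(a (shift t) k) / (2 * a t 0)‖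
              + ‖(∑ i ∈ Finset.Ico 1 (4 * k + 1), a t i * a t (4 * k + 1 - i)) / (2 * a t 0)‖ :=
              norm_sub_le _ _
          _ = ‖a (shift t) k‖ / 2
              + ‖∑ i ∈ Finset.Ico 1 (4 * k + 1), a t i * a t (4 * k + 1 - i)‖ / 2 := by
              rw [norm_div, norm_div, norm_neg, hn2]
          _ ≤ bb (4 * k + 1) := by
              have h4 : (4:ℕ) * k + 1 = (4 * k) + 1 := rfl
              rw [h4] at hsum ⊢
              linarith
      · rw [if_neg hd]
        rw [norm_div, norm_neg, hn2]
        have hb := bb_nonneg (m + 1)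
        linarith
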